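/- Let A be a finitely generated commutative monoid with zero. Then for every multiplicative subset S of A there is an element f ∈ A such that the set of prime ideals disjoint from S equals the set of prime ideals not containing f. -/

import Mathlib

/-- An ideal of a commutative monoid with zero: a nonempty subset `I` with `I·A ⊆ I`. -/
def IsMonIdeal {A : Type*} [CommMonoidWithZero A] (I : Set A) : Prop :=
  I.Nonempty ∧ ∀ a ∈ I, ∀ b : A, a * b ∈ I

/-- A prime ideal of a commutative monoid with zero. -/
def IsMonPrimeIdeal {A : Type*} [CommMonoidWithZero A] (p : Set A) : Prop :=
  IsMonIdeal p ∧ 1 ∉ p ∧ ∀ a b : A, a * b ∈ p → a ∈ p ∨ b ∈ p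

/-- `Γ` generates the monoid `A`: every element other than `0` and `1` is a (nonempty)
product of elements of `Γ`. -/
def GeneratesMonoid {A : Type*} [CommMonoidWithZero A] (Γ : Set A) : Prop :=
  ∀ a : A, a ≠ 0 → a ≠ 1 → ∃ l : List A, l ≠ [] ∧ (∀ x ∈ l, x ∈ Γ) ∧ l.prod = a

/-- A finitely generated commutative monoid with zero. -/
def MonoidFG (A : Type*) [CommMonoidWithZero A] : Prop :=
  ∃ Γ : Finset A, GeneratesMonoid (↑Γ : Set A)

/-- For a finitely generated monoid `A` and any multiplicative subset `S` there is an
`f ∈ A` such that `U_S = D_f`: the primes disjoint from `S` are exactly the primes not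
containing `f`. -/
theorem exists_f_US_eq_Df {A : Type*} [CommMonoidWithZero A] (hA : MonoidFG A)
    (S : Submonoid A) :
    ∃ f : A, {p : Set A | IsMonPrimeIdeal p ∧ p ∩ ↑S = ∅} =
      {p : Set A | IsMonPrimeIdeal p ∧ f ∉ p} := by
  classical
  obtain ⟨Γ, hΓ⟩ := hA
  -- auxiliary: 0 belongs to every prime ideal
  have hzero : ∀ {p : Set A}, IsMonPrimeIdeal p → (0 : A) ∈ p := by
    intro p hp
    obtain ⟨a, ha⟩ := hp.1.1
    have := hp.1.2 a ha 0
    rwa [mul_zero] at this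
  -- auxiliary: primes detect factors of list products
  have hlist : ∀ {p : Set A}, IsMonPrimeIdeal p → ∀ l : List A,
      l.prod ∈ p → ∃ x ∈ l, x ∈ p := by
    intro p hp l
    induction l with
    | nil => intro h; simp at h; exact absurd h hp.2.1
    | cons a t ih =>
      intro h
      rw [List.prod_cons] at h
      rcases hp.2.2 _ _ h with h | h
      · exact ⟨a, List.mem_cons_self, h⟩
      · obtain ⟨x, hx, hxp⟩ := ih h
        exact ⟨x, List.mem_cons_of_mem _ hx, hxp⟩
  by_cases h0 : (0 : A) ∈ S
  · refine ⟨0, ?_⟩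
    ext p
    simp only [Set.mem_setOf_eq]
    constructor
    · rintro ⟨hp, hdis⟩
      exact absurd (Set.eq_empty_iff_forall_notMem.mp hdis 0 ⟨hzero hp, h0⟩) (by simp)
    · rintro ⟨hp, hf⟩
      exact absurd (hzero hp) hf
  · set ΓS : Finset A := Γ.filter (fun γ => ∃ s ∈ S, γ ∣ s) with hΓS
    refine ⟨ΓS.toList.prod, ?_⟩
    ext p
    simp only [Set.mem_setOf_eq]
    constructor
    · rintro ⟨hp, hdis⟩
      refine ⟨hp, fun hf => ?_⟩
      obtain ⟨γ, hγl, hγp⟩ := hlist hp _ hf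
      have hγ : γ ∈ ΓS := Finset.mem_toList.mp hγl
      obtain ⟨-, s, hsS, c, hc⟩ := Finset.mem_filter.mp hγ
      have hsp : s ∈ p := by
        rw [hc]; exact hp.1.2 _ hγp c
      exact Set.eq_empty_iff_forall_notMem.mp hdis s ⟨hsp, hsS⟩
    · rintro ⟨hp, hf⟩
      refine ⟨hp, Set.eq_empty_iff_forall_notMem.mpr ?_⟩
      rintro x ⟨hxp, hxS⟩
      have hx0 : x ≠ 0 := fun h => h0 (h ▸ hxS)
      have hx1 : x ≠ 1 := fun h => hp.2.1 (h ▸ hxp)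
      obtain ⟨l, -, hlΓ, hlprod⟩ := hΓ x hx0 hx1
      obtain ⟨γ, hγl, hγp⟩ := hlist hp l (hlprod ▸ hxp)
      have hγΓS : γ ∈ ΓS := by
        refine Finset.mem_filter.mpr ⟨hlΓ γ hγl, x, hxS, ?_⟩
        exact hlprod ▸ List.dvd_prod hγl
      obtain ⟨c, hc⟩ := List.dvd_prod (Finset.mem_toList.mpr hγΓS)
      exact hf (hc ▸ hp.1.2 _ hγp c)
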